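/- Let E, A ∈ ℝ^{n×n} and suppose there exists a matrix M such that EᵀM is symmetric positive definite and AᵀM + MᵀA is negative definite. Then every finite generalized eigenvalue λ of the pencil sE − A (i.e., every λ ∈ ℂ with det(λE − A) = 0 and an eigenvector v with Ev ≠ 0) satisfies Re(λ) < 0. -/

import Mathlib

open Matrix

lemma re_quad (n : ℕ) (P : Matrix (Fin n) (Fin n) ℝ) (v : Fin n → ℂ) :
    (star v ⬝ᵥ (P.map Complex.ofReal) *ᵥ v).re
      = (fun i => (v i).re) ⬝ᵥ P *ᵥ (fun i => (v i).re)
        + (fun i => (v i).im) ⬝ᵥ P *ᵥ (fun i => (v i).im) := by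
  simp only [dotProduct, mulVec, Matrix.map_apply, Pi.star_apply, Complex.re_sum,
    Finset.mul_sum, ← Finset.sum_add_distrib]
  refine Finset.sum_congr rfl fun i _ => Finset.sum_congr rfl fun j _ => ?_
  simp [Complex.mul_re, Complex.mul_im, RCLike.star_def]
  try ring

lemma im_quad (n : ℕ) (P : Matrix (Fin n) (Fin n) ℝ) (v : Fin n → ℂ) :
    (star v ⬝ᵥ (P.map Complex.ofReal) *ᵥ v).im
      = (fun i => (v i).re) ⬝ᵥ P *ᵥ (fun i => (v i).im)
        - (fun i => (v i).im) ⬝ᵥ P *ᵥ (fun i => (v i).re) := by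
  simp only [dotProduct, mulVec, Matrix.map_apply, Pi.star_apply, Complex.im_sum,
    Finset.mul_sum, ← Finset.sum_sub_distrib]
  refine Finset.sum_congr rfl fun i _ => Finset.sum_congr rfl fun j _ => ?_
  simp [Complex.mul_re, Complex.mul_im, RCLike.star_def]
  try ring

/-- Strict positivity of the complexified quadratic form of a real positive
definite matrix. -/
lemma re_quad_pos (n : ℕ) (P : Matrix (Fin n) (Fin n) ℝ) (hP : P.PosDef)
    (v : Fin n → ℂ) (hv : v ≠ 0) :
    0 < (star v ⬝ᵥ (P.map Complex.ofReal) *ᵥ v).re := by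
  rw [re_quad]
  set x : Fin n → ℝ := fun i => (v i).re with hx
  set y : Fin n → ℝ := fun i => (v i).im with hy
  have hxy : x ≠ 0 ∨ y ≠ 0 := by
    by_contra h
    push_neg at h
    apply hv
    funext i
    have h1 := congrFun h.1 i
    have h2 := congrFun h.2 i
    exact Complex.ext h1 h2
  have hsd := hP.posSemidef
  rcases hxy with h | h
  · have := hP.dotProduct_mulVec_pos h
    have := hsd.dotProduct_mulVec_nonneg y
    simp only [star_trivial, RCLike.re_to_real] at *
    linarith
  · have := hP.dotProduct_mulVec_pos h
    have := hsd.dotProduct_mulVec_nonneg x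
    simp only [star_trivial, RCLike.re_to_real] at *
    linarith

lemma mulVec_star' (n : ℕ) (B : Matrix (Fin n) (Fin n) ℝ) (v : Fin n → ℂ) :
    (B.map Complex.ofReal) *ᵥ star v = star ((B.map Complex.ofReal) *ᵥ v) := by
  funext i
  simp [mulVec, dotProduct, Matrix.map_apply, Pi.star_apply, star_sum, Complex.conj_ofReal]

/-- Lyapunov-type stability condition for descriptor systems: if EᵀM is
symmetric positive definite and AᵀM + MᵀA is negative definite, then every
finite generalized eigenvalue λ of the pencil sE − A satisfies Re(λ) < 0. -/
theorem lyapunov_descriptor_stability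
    (n : ℕ) (E A M : Matrix (Fin n) (Fin n) ℝ)
    (hsym : (Eᵀ * M).IsSymm) (hpos : (Eᵀ * M).PosDef)
    (hneg : (-(Aᵀ * M + Mᵀ * A)).PosDef)
    (lam : ℂ) (v : Fin n → ℂ) (hv : v ≠ 0)
    (heig : (A.map Complex.ofReal).mulVec v = lam • (E.map Complex.ofReal).mulVec v)
    (hEv : (E.map Complex.ofReal).mulVec v ≠ 0) :
    lam.re < 0 := by
  have mapE : ∀ (B C : Matrix (Fin n) (Fin n) ℝ),
      (B * C).map (Complex.ofReal : ℝ → ℂ) = B.map Complex.ofReal * C.map Complex.ofReal := by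
    intro B C
    exact Matrix.map_mul (f := Complex.ofRealHom)
  have mapT : ∀ (B : Matrix (Fin n) (Fin n) ℝ),
      (Bᵀ).map (Complex.ofReal : ℝ → ℂ) = (B.map Complex.ofReal)ᵀ := by
    intro B; rfl
  set Ac := A.map (Complex.ofReal : ℝ → ℂ)
  set Ec := E.map (Complex.ofReal : ℝ → ℂ)
  set Mc := M.map (Complex.ofReal : ℝ → ℂ)
  set c : ℂ := star v ⬝ᵥ ((Eᵀ * M).map Complex.ofReal) *ᵥ v with hc
  -- c as a dot product of Ev and Mv
  have hc' : c = star (Ec *ᵥ v) ⬝ᵥ (Mc *ᵥ v) := by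
    rw [hc, mapE, mapT, ← mulVec_mulVec, dotProduct_mulVec, vecMul_transpose,
      mulVec_star' n E v]
  -- key identity
  have key : star v ⬝ᵥ ((Aᵀ * M + Mᵀ * A).map Complex.ofReal) *ᵥ v
      = (starRingEnd ℂ) lam * c + lam * (starRingEnd ℂ) c := by
    have hmap : (Aᵀ * M + Mᵀ * A).map (Complex.ofReal : ℝ → ℂ)
        = Acᵀ * Mc + Mcᵀ * Ac := by
      have : (Aᵀ * M + Mᵀ * A).map (Complex.ofReal : ℝ → ℂ)
          = (Aᵀ * M).map Complex.ofReal + (Mᵀ * A).map Complex.ofReal := by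
        ext i j; simp [Matrix.map_apply]
      rw [this, mapE, mapE, mapT, mapT]
    rw [hmap, add_mulVec, dotProduct_add]
    have hT1 : star v ⬝ᵥ (Acᵀ * Mc) *ᵥ v = (starRingEnd ℂ) lam * c := by
      rw [← mulVec_mulVec, dotProduct_mulVec, vecMul_transpose]
      rw [mulVec_star' n A v, heig, star_smul, smul_dotProduct, hc']
      rfl
    have hT2 : star v ⬝ᵥ (Mcᵀ * Ac) *ᵥ v = lam * (starRingEnd ℂ) c := by
      rw [← mulVec_mulVec, heig, mulVec_smul, dotProduct_smul, smul_eq_mul]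
      congr 1
      rw [dotProduct_mulVec, vecMul_transpose]
      rw [mulVec_star' n M v, hc', star_dotProduct]
      rfl
    rw [hT1, hT2]
  -- c is a positive real
  have hcre : 0 < c.re := re_quad_pos n (Eᵀ * M) hpos v hv
  have hcim : c.im = 0 := by
    rw [hc, im_quad]
    have : (fun i => (v i).re) ⬝ᵥ (Eᵀ * M) *ᵥ (fun i => (v i).im)
        = (fun i => (v i).im) ⬝ᵥ (Eᵀ * M) *ᵥ (fun i => (v i).re) := by
      rw [dotProduct_mulVec, ← mulVec_transpose, hsym.eq, dotProduct_comm]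
    rw [this, sub_self]
  -- left side has negative real part
  have hlt : (star v ⬝ᵥ ((Aᵀ * M + Mᵀ * A).map Complex.ofReal) *ᵥ v).re < 0 := by
    have := re_quad_pos n (-(Aᵀ * M + Mᵀ * A)) hneg v hv
    rw [re_quad] at this ⊢
    simp only [neg_mulVec, dotProduct_neg] at this
    linarith
  rw [key] at hlt
  simp only [Complex.add_re, Complex.mul_re, Complex.conj_re, Complex.conj_im, hcim,
    mul_zero, neg_zero, zero_mul, sub_zero, add_zero] at hlt
  nlinarith
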